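/- Let X be a discrete random variable with values in {x_1,...,x_N}, and let A ≥ 16 be such that P[X = x_i] ≥ 1/A for all i ∈ [N]. Let J ⊆ {x_1,...,x_N} and let E be the event that X ∈ J. Suppose P[E] ≥ 1 - a for some 0 ≤ a ≤ 1/2. Then H(X) - H(X | E) ≤ 2a·log₂ A. -/
import Mathlib


open Finset

/-- If `X` is a discrete random variable with outcomes `x_1, …, x_N` each of probability
at least `1/A` (with `A ≥ 16`), `E` is the event that `X ∈ J`, and `P[E] ≥ 1 - a` for some
`0 ≤ a ≤ 1/2`, then `H(X) - H(X | E) ≤ 2 a log₂ A`.  Here `p i` is the probability of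
outcome `x_i`, so the conditional probabilities given `E` are `p i / P[E]` for `i ∈ J`
and `0` otherwise, and entropy is `H = -∑ p_i log₂ p_i`. -/
theorem entropy_cond_event_ge {N : ℕ} (p : Fin N → ℝ) (A : ℝ) (hA : 16 ≤ A)
    (hp : ∀ i, 1 / A ≤ p i) (hsum : ∑ i, p i = 1)
    (J : Finset (Fin N)) (a : ℝ) (ha0 : 0 ≤ a) (ha : a ≤ 1 / 2)
    (hE : 1 - a ≤ ∑ i ∈ J, p i) :
    (-∑ i, p i * Real.logb 2 (p i)) -
      (-∑ i, (if i ∈ J then p i / (∑ j ∈ J, p j) else 0) *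
          Real.logb 2 (if i ∈ J then p i / (∑ j ∈ J, p j) else 0)) ≤
      2 * a * Real.logb 2 A := by
  have hA0 : (0:ℝ) < A := by linarith
  have hpi : ∀ i, 0 < p i := fun i => lt_of_lt_of_le (by positivity) (hp i)
  set q := ∑ j ∈ J, p j with hqdef
  have hq1 : q ≤ 1 := by
    rw [← hsum]
    exact Finset.sum_le_sum_of_subset_of_nonneg (Finset.subset_univ J)
      (fun i _ _ => (hpi i).le)
  have hq0 : (0:ℝ) < q := by linarith
  have hp1 : ∀ i, p i ≤ 1 := by
    intro i
    rw [← hsum]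
    exact Finset.single_le_sum (fun j _ => (hpi j).le) (Finset.mem_univ i)
  have hL : ∀ i, Real.logb 2 (p i) ≤ 0 := fun i =>
    Real.logb_nonpos (by norm_num) (hpi i).le (hp1 i)
  have hlogA : (4:ℝ) ≤ Real.logb 2 A := by
    have h16 : Real.logb 2 16 ≤ Real.logb 2 A :=
      Real.logb_le_logb_of_le (by norm_num) (by norm_num) hA
    have : Real.logb 2 16 = 4 := by
      rw [show (16:ℝ) = (2:ℝ) ^ (4:ℝ) from by
        rw [show (4:ℝ) = ((4:ℕ):ℝ) by norm_num, Real.rpow_natCast]; norm_num]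
      exact Real.logb_rpow (by norm_num) (by norm_num)
    linarith
  set S := ∑ i ∈ J, p i * Real.logb 2 (p i) with hSdef
  set C := ∑ i ∈ Jᶜ, p i * Real.logb 2 (p i) with hCdef
  have hsplit : ∑ i, p i * Real.logb 2 (p i) = S + C :=
    (Finset.sum_add_sum_compl J _).symm
  have hcond : ∑ i, (if i ∈ J then p i / q else 0) *
      Real.logb 2 (if i ∈ J then p i / q else 0) = (1/q) * S - Real.logb 2 q := by
    have h1 : ∀ i ∈ (univ : Finset (Fin N)),
        (if i ∈ J then p i / q else 0) * Real.logb 2 (if i ∈ J then p i / q else 0)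
        = if i ∈ J then (1/q) * (p i * Real.logb 2 (p i)) - (Real.logb 2 q / q) * p i
          else 0 := by
      intro i _
      by_cases h : i ∈ J
      · simp only [h, if_true]
        rw [Real.logb_div (hpi i).ne' hq0.ne']
        ring
      · simp [h]
    rw [Finset.sum_congr rfl h1, Finset.sum_ite_mem, Finset.univ_inter,
      Finset.sum_sub_distrib, ← Finset.mul_sum, ← Finset.mul_sum, ← hSdef, ← hqdef,
      div_mul_cancel₀ _ hq0.ne']
  rw [hsplit, hcond]
  have hS : S ≤ 0 :=
    Finset.sum_nonpos fun i _ => mul_nonpos_of_nonneg_of_nonpos (hpi i).le (hL i)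
  have h1q : 1 ≤ 1/q := by rw [le_div_iff₀ hq0]; linarith
  have hS2 : (1/q) * S - S ≤ 0 := by nlinarith
  have hC2 : -C ≤ a * Real.logb 2 A := by
    have hsumc : ∑ i ∈ Jᶜ, p i = 1 - q := by
      have := Finset.sum_add_sum_compl J p
      rw [hsum] at this; linarith
    have hb : ∀ i ∈ Jᶜ, -(p i * Real.logb 2 (p i)) ≤ p i * Real.logb 2 A := by
      intro i _
      have h1 : Real.logb 2 (1/A) ≤ Real.logb 2 (p i) :=
        Real.logb_le_logb_of_le (by norm_num) (by positivity) (hp i)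
      rw [one_div, Real.logb_inv] at h1
      nlinarith [hpi i]
    calc -C = ∑ i ∈ Jᶜ, -(p i * Real.logb 2 (p i)) := by rw [hCdef]; simp
      _ ≤ ∑ i ∈ Jᶜ, p i * Real.logb 2 A := Finset.sum_le_sum hb
      _ = (1 - q) * Real.logb 2 A := by rw [← Finset.sum_mul, hsumc]
      _ ≤ a * Real.logb 2 A := by nlinarith
  have hq2 : -Real.logb 2 q ≤ a * Real.logb 2 A := by
    have hx : (0:ℝ) < 1 - a := by linarith
    have hlog := Real.log_le_sub_one_of_pos (show (0:ℝ) < (1-a)⁻¹ by positivity)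
    rw [Real.log_inv] at hlog
    have hinv : (1-a)⁻¹ - 1 ≤ 2*a := by
      have h1 : 1 ≤ (1+2*a)*(1-a) := by nlinarith
      have h2 : (1-a)⁻¹ ≤ 1+2*a := by
        rw [inv_le_iff_one_le_mul₀ hx]
        linarith [h1]
      linarith
    have hlog2 : -Real.log (1-a) ≤ 2*a := by linarith
    have hmono : Real.logb 2 (1-a) ≤ Real.logb 2 q :=
      Real.logb_le_logb_of_le (by norm_num) hx (by linarith)
    have hln2 : (1:ℝ)/2 ≤ Real.log 2 := by
      have := Real.log_two_gt_d9; linarith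
    have hlb : -Real.logb 2 (1-a) ≤ 4*a := by
      rw [Real.logb, ← neg_div]
      rw [div_le_iff₀ (by linarith : (0:ℝ) < Real.log 2)]
      nlinarith
    nlinarith [hlogA]
  linarith
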